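/- Let μ be a positive measure on ℝ₊ⁿ∖{0} with ∫ min(1, Σ_j u_j) dμ(u) < ∞, let c₀ ∈ ℝ and c₁ ∈ ℝ₊ⁿ. Then the function ψ(z) := c₀ + c₁·z + ∫_{ℝ₊ⁿ∖{0}} (e^{z·u} − 1) dμ(u) is well defined for all z ∈ ℂⁿ with Re z_j ≤ 0 for all j; it is holomorphic on the open domain {z ∈ ℂⁿ : Re z_j < 0 for all j} and continuous on its closure {z ∈ ℂⁿ : Re z_j ≤ 0 for all j}. -/

import Mathlib

open MeasureTheory

/-- The positive orthant `ℝ₊ⁿ = [0,∞)ⁿ`. -/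
def posOrthant (n : ℕ) : Set (Fin n → ℝ) := {u | ∀ j, 0 ≤ u j}

set_option maxHeartbeats 1000000

noncomputable def sumCLM (n : ℕ) (u : Fin n → ℝ) : (Fin n → ℂ) →L[ℂ] ℂ :=
  ∑ j, (u j : ℂ) • ContinuousLinearMap.proj j

lemma sumCLM_apply (n : ℕ) (u : Fin n → ℝ) (z : Fin n → ℂ) :
    sumCLM n u z = ∑ j, z j * (u j : ℂ) := by
  simp [sumCLM, ContinuousLinearMap.sum_apply, mul_comm]

lemma sumCLM_norm_le (n : ℕ) (u : Fin n → ℝ) (hu : ∀ j, 0 ≤ u j) :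
    ‖sumCLM n u‖ ≤ ∑ j, u j := by
  refine ContinuousLinearMap.opNorm_le_bound _ (Finset.sum_nonneg fun j _ => hu j) fun z => ?_
  rw [sumCLM_apply, Finset.sum_mul]
  refine (norm_sum_le _ _).trans (Finset.sum_le_sum fun j _ => ?_)
  rw [norm_mul, Complex.norm_real, Real.norm_of_nonneg (hu j)]
  exact mul_le_mul_of_nonneg_right (norm_le_pi_norm z j) (hu j) |>.trans (by rw [mul_comm])

lemma norm_exp_sub_one_le' {w : ℂ} (hw : w.re ≤ 0) :
    ‖Complex.exp w - 1‖ ≤ 2 * min 1 ‖w‖ := by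
  rcases le_or_gt ‖w‖ 1 with h | h
  · rw [min_eq_right h]
    exact Complex.norm_exp_sub_one_le h
  · rw [min_eq_left h.le, mul_one]
    calc ‖Complex.exp w - 1‖ ≤ ‖Complex.exp w‖ + ‖(1 : ℂ)‖ := norm_sub_le _ _
    _ ≤ 1 + 1 := by
        rw [Complex.norm_exp, norm_one]
        exact add_le_add_left (Real.exp_le_one_iff.2 hw) 1
    _ = 2 := by norm_num

lemma min_one_mul_le {M s : ℝ} (hs : 0 ≤ s) :
    min 1 (M * s) ≤ max 1 M * min 1 s := by
  rcases le_or_gt 1 s with h | h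
  · rw [min_eq_left h]
    calc min 1 (M * s) ≤ 1 := min_le_left _ _
    _ ≤ max 1 M * 1 := by rw [mul_one]; exact le_max_left _ _
  · rw [min_eq_right h.le]
    calc min 1 (M * s) ≤ M * s := min_le_right _ _
    _ ≤ max 1 M * s := mul_le_mul_of_nonneg_right (le_max_right _ _) hs

lemma mul_exp_neg_le {δ s : ℝ} (hδ : 0 < δ) (hs : 0 ≤ s) :
    s * Real.exp (-(δ * s)) ≤ max 1 δ⁻¹ * min 1 s := by
  rcases le_or_gt s 1 with h | h
  · rw [min_eq_right h]
    have h1 : Real.exp (-(δ * s)) ≤ 1 := Real.exp_le_one_iff.2 (neg_nonpos.2 (by positivity))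
    have h4 : (1:ℝ) ≤ max 1 δ⁻¹ := le_max_left _ _
    nlinarith
  · rw [min_eq_left h.le, mul_one]
    have h1 : δ * s ≤ Real.exp (δ * s) := (Real.add_one_le_exp _).trans' (by linarith)
    have h4 : s * Real.exp (-(δ * s)) ≤ s / (δ * s) := by
      rw [Real.exp_neg, div_eq_mul_inv]
      exact mul_le_mul_of_nonneg_left (inv_anti₀ (by positivity) h1) hs
    calc s * Real.exp (-(δ * s)) ≤ s / (δ * s) := h4
    _ = δ⁻¹ := by field_simp
    _ ≤ max 1 δ⁻¹ := le_max_right _ _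

lemma re_sum_le {n : ℕ} (z : Fin n → ℂ) (u : Fin n → ℝ) (δ : ℝ)
    (hz : ∀ j, (z j).re ≤ -δ) (hu : ∀ j, 0 ≤ u j) :
    (∑ j, z j * (u j : ℂ)).re ≤ -(δ * ∑ j, u j) := by
  rw [Complex.re_sum]
  have he : ∀ j ∈ Finset.univ, (z j * (u j : ℂ)).re ≤ -δ * u j := by
    intro j _
    have : (z j * (u j : ℂ)).re = (z j).re * u j := by simp [Complex.mul_re]
    rw [this]
    exact mul_le_mul_of_nonneg_right (hz j) (hu j)
  calc ∑ j, (z j * (u j : ℂ)).re ≤ ∑ j, -δ * u j := Finset.sum_le_sum he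
  _ = -(δ * ∑ j, u j) := by rw [Finset.mul_sum]; simp [neg_mul]

lemma key_bound {n : ℕ} (z : Fin n → ℂ) (u : Fin n → ℝ)
    (hz : ∀ j, (z j).re ≤ 0) (hu : ∀ j, 0 ≤ u j) :
    ‖Complex.exp (∑ j, z j * (u j : ℂ)) - 1‖ ≤ 2 * max 1 ‖z‖ * min 1 (∑ j, u j) := by
  set w : ℂ := ∑ j, z j * (u j : ℂ) with hw
  have hwre : w.re ≤ 0 := by
    have := re_sum_le z u 0 (fun j => by simpa using hz j) hu
    rw [hw]
    simpa using this
  have hwn : ‖w‖ ≤ ‖z‖ * ∑ j, u j := by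
    calc ‖w‖ ≤ ∑ j, ‖z j * (u j : ℂ)‖ := norm_sum_le _ _
    _ ≤ ∑ j, ‖z‖ * u j := by
        refine Finset.sum_le_sum fun j _ => ?_
        rw [norm_mul, Complex.norm_real, Real.norm_of_nonneg (hu j)]
        exact mul_le_mul_of_nonneg_right (norm_le_pi_norm z j) (hu j)
    _ = ‖z‖ * ∑ j, u j := by rw [Finset.mul_sum]
  have hsum : (0:ℝ) ≤ ∑ j, u j := Finset.sum_nonneg fun j _ => hu j
  calc ‖Complex.exp w - 1‖ ≤ 2 * min 1 ‖w‖ := norm_exp_sub_one_le' hwre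
  _ ≤ 2 * min 1 (‖z‖ * ∑ j, u j) := by
      exact mul_le_mul_of_nonneg_left (min_le_min le_rfl hwn) (by norm_num)
  _ ≤ 2 * (max 1 ‖z‖ * min 1 (∑ j, u j)) :=
      mul_le_mul_of_nonneg_left (min_one_mul_le hsum) (by norm_num)
  _ = 2 * max 1 ‖z‖ * min 1 (∑ j, u j) := (mul_assoc _ _ _).symm

/-- Let `μ` be a positive measure on `ℝ₊ⁿ∖{0}` with
`∫ min(1, Σ_j u_j) dμ(u) < ∞`, `c₀ ∈ ℝ`, `c₁ ∈ ℝ₊ⁿ`. Then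
`ψ(z) = c₀ + c₁·z + ∫ (e^{z·u} − 1) dμ(u)` is well defined for `Re z_j ≤ 0` (the integrand
is Bochner integrable), holomorphic on `{Re z_j < 0}` and continuous on `{Re z_j ≤ 0}`. -/
theorem bernstein_function_holomorphic_extension
    (n : ℕ) (μ : Measure (Fin n → ℝ))
    (hμsupp : μ {u | ¬(u ∈ posOrthant n ∧ u ≠ 0)} = 0)
    (hμint : ∫⁻ u, ENNReal.ofReal (min 1 (∑ j, u j)) ∂μ < ⊤)
    (c₀ : ℝ) (c₁ : Fin n → ℝ) (hc₁ : ∀ j, 0 ≤ c₁ j) :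
    (∀ z : Fin n → ℂ, (∀ j, (z j).re ≤ 0) →
        Integrable (fun u => Complex.exp (∑ j, z j * (u j : ℂ)) - 1) μ)
    ∧ DifferentiableOn ℂ
        (fun z : Fin n → ℂ =>
          (c₀ : ℂ) + (∑ j, (c₁ j : ℂ) * z j)
            + ∫ u, (Complex.exp (∑ j, z j * (u j : ℂ)) - 1) ∂μ)
        {z : Fin n → ℂ | ∀ j, (z j).re < 0}
    ∧ ContinuousOn
        (fun z : Fin n → ℂ =>
          (c₀ : ℂ) + (∑ j, (c₁ j : ℂ) * z j)
            + ∫ u, (Complex.exp (∑ j, z j * (u j : ℂ)) - 1) ∂μ)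
        {z : Fin n → ℂ | ∀ j, (z j).re ≤ 0} := by
  -- almost every `u` lies in the positive orthant
  have hae : ∀ᵐ u ∂μ, ∀ j, 0 ≤ u j := by
    have h : ∀ᵐ u ∂μ, u ∈ posOrthant n ∧ u ≠ 0 := (ae_iff).2 hμsupp
    exact h.mono fun u hu => hu.1
  -- integrability of the dominating function
  have hgint : Integrable (fun u : Fin n → ℝ => min 1 (∑ j, u j)) μ := by
    constructor
    · exact (continuous_const.min
        (continuous_finset_sum _ fun j _ => continuous_apply j)).aestronglyMeasurable
    · have hcongr : ∀ᵐ u ∂μ, ‖min 1 (∑ j, u j)‖ₑ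
          = ENNReal.ofReal (min 1 (∑ j, u j)) := by
        refine hae.mono fun u hu => ?_
        have h0 : 0 ≤ min 1 (∑ j, u j) := le_min one_pos.le (Finset.sum_nonneg fun j _ => hu j)
        rw [← Real.enorm_eq_ofReal h0]
      rw [HasFiniteIntegral, lintegral_congr_ae hcongr]
      exact hμint
  -- measurability of the integrand, for every `z`
  have hmeas : ∀ z : Fin n → ℂ,
      AEStronglyMeasurable (fun u : Fin n → ℝ => Complex.exp (∑ j, z j * (u j : ℂ)) - 1) μ := by
    intro z
    refine Continuous.aestronglyMeasurable ?_
    exact (Complex.continuous_exp.comp (continuous_finset_sum _ fun j _ =>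
      continuous_const.mul (Complex.continuous_ofReal.comp (continuous_apply j)))).sub
      continuous_const
  -- integrability of the integrand
  have hIntegrable : ∀ z : Fin n → ℂ, (∀ j, (z j).re ≤ 0) →
      Integrable (fun u => Complex.exp (∑ j, z j * (u j : ℂ)) - 1) μ := by
    intro z hz
    refine (hgint.const_mul (2 * max 1 ‖z‖)).mono' (hmeas z) ?_
    refine hae.mono fun u hu => ?_
    calc ‖Complex.exp (∑ j, z j * (u j : ℂ)) - 1‖ ≤ 2 * max 1 ‖z‖ * min 1 (∑ j, u j) :=
        key_bound z u hz hu
    _ = 2 * max 1 ‖z‖ * min 1 (∑ j, u j) := rfl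
  -- the affine part
  have haff : Differentiable ℂ (fun z : Fin n → ℂ => (c₀ : ℂ) + ∑ j, (c₁ j : ℂ) * z j) := by
    refine (differentiable_const _).add ?_
    refine Differentiable.fun_sum fun j _ => ?_
    exact (differentiable_const _).mul (ContinuousLinearMap.proj j :
      (Fin n → ℂ) →L[ℂ] ℂ).differentiable
  refine ⟨hIntegrable, ?_, ?_⟩
  · -- differentiability
    intro z₀ hz₀
    refine DifferentiableAt.differentiableWithinAt ?_
    refine (haff.differentiableAt).add ?_
    -- choose a radius δ
    obtain ⟨δ, hδpos, hδ⟩ : ∃ δ : ℝ, 0 < δ ∧ ∀ j, (z₀ j).re ≤ -(2 * δ) := by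
      rcases Nat.eq_zero_or_pos n with h0 | hpos
      · exact ⟨1, one_pos, fun j => absurd j.isLt (by omega)⟩
      · haveI : Nonempty (Fin n) := ⟨⟨0, hpos⟩⟩
        set m := Finset.univ.inf' Finset.univ_nonempty (fun j => -(z₀ j).re) with hm
        have hmpos : 0 < m := by
          rw [hm, Finset.lt_inf'_iff]
          exact fun j _ => neg_pos.2 (hz₀ j)
        refine ⟨m / 2, by positivity, fun j => ?_⟩
        have := Finset.inf'_le (fun j => -(z₀ j).re) (Finset.mem_univ j)
        rw [← hm] at this
        linarith
    have hball : ∀ z ∈ Metric.ball z₀ δ, ∀ j, (z j).re ≤ -δ := by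
      intro z hz j
      have h1 : ‖z - z₀‖ < δ := by rwa [Metric.mem_ball, dist_eq_norm] at hz
      have h2 : |(z j - z₀ j).re| ≤ ‖z j - z₀ j‖ := Complex.abs_re_le_norm _
      have h3 : ‖z j - z₀ j‖ ≤ ‖z - z₀‖ := by
        simpa using norm_le_pi_norm (z - z₀) j
      have h4 := (abs_le.1 h2).2
      have h5 := hδ j
      rw [Complex.sub_re] at h4
      linarith
    -- derivative under the integral sign
    have hder : HasFDerivAt
        (fun z : Fin n → ℂ => ∫ u, (Complex.exp (∑ j, z j * (u j : ℂ)) - 1) ∂μ)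
        (∫ u, Complex.exp (sumCLM n u z₀) • sumCLM n u ∂μ) z₀ := by
      refine hasFDerivAt_integral_of_dominated_of_fderiv_le
        (F' := fun z u => Complex.exp (sumCLM n u z) • sumCLM n u)
        (bound := fun u => max 1 δ⁻¹ * min 1 (∑ j, u j)) (Metric.ball_mem_nhds z₀ hδpos)
        (Filter.Eventually.of_forall fun z => hmeas z)
        (hIntegrable z₀ fun j => (hz₀ j).le) ?_ ?_ (hgint.const_mul _) ?_
      · -- measurability of the derivative
        refine Continuous.aestronglyMeasurable ?_
        have h1 : Continuous fun u : Fin n → ℝ => sumCLM n u := by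
          unfold sumCLM
          exact continuous_finset_sum _ fun j _ =>
            (Complex.continuous_ofReal.comp (continuous_apply j)).smul continuous_const
        have h2 : Continuous fun u : Fin n → ℝ => Complex.exp (sumCLM n u z₀) := by
          have : (fun u : Fin n → ℝ => sumCLM n u z₀)
              = fun u => ∑ j, z₀ j * (u j : ℂ) := by
            funext u; rw [sumCLM_apply]
          exact Complex.continuous_exp.comp (this ▸ (continuous_finset_sum _ fun j _ =>
            continuous_const.mul (Complex.continuous_ofReal.comp (continuous_apply j))))
        exact h2.smul h1
      · -- bound on the derivative
        refine hae.mono fun u hu z hz => ?_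
        have hre : (sumCLM n u z).re ≤ -(δ * ∑ j, u j) := by
          rw [sumCLM_apply]
          exact re_sum_le z u δ (hball z hz) hu
        have hs : (0:ℝ) ≤ ∑ j, u j := Finset.sum_nonneg fun j _ => hu j
        calc ‖Complex.exp (sumCLM n u z) • sumCLM n u‖
            ≤ ‖Complex.exp (sumCLM n u z)‖ * ‖sumCLM n u‖ :=
              ContinuousLinearMap.opNorm_smul_le _ _
        _ ≤ Real.exp (-(δ * ∑ j, u j)) * (∑ j, u j) := by
            refine mul_le_mul ?_ (sumCLM_norm_le n u hu) (norm_nonneg _) (Real.exp_pos _).le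
            rw [Complex.norm_exp]
            exact Real.exp_le_exp.2 hre
        _ = (∑ j, u j) * Real.exp (-(δ * ∑ j, u j)) := mul_comm _ _
        _ ≤ max 1 δ⁻¹ * min 1 (∑ j, u j) := mul_exp_neg_le hδpos hs
      · -- differentiability of the integrand
        refine Filter.Eventually.of_forall fun u z hz => ?_
        have h1 : HasFDerivAt (fun z : Fin n → ℂ => Complex.exp (sumCLM n u z) - 1)
            (Complex.exp (sumCLM n u z) • sumCLM n u) z :=
          ((Complex.hasDerivAt_exp _).comp_hasFDerivAt z (sumCLM n u).hasFDerivAt).sub_const 1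
        have heq : (fun z : Fin n → ℂ => Complex.exp (sumCLM n u z) - 1)
            = fun z => Complex.exp (∑ j, z j * (u j : ℂ)) - 1 := by
          funext z; rw [sumCLM_apply]
        rwa [heq] at h1
    exact hder.differentiableAt
  · -- continuity
    intro z₀ hz₀
    refine ContinuousWithinAt.add (haff.continuous.continuousWithinAt) ?_
    refine continuousWithinAt_of_dominated
      (bound := fun u => 2 * max 1 (‖z₀‖ + 1) * min 1 (∑ j, u j))
      (Filter.Eventually.of_forall fun z => hmeas z) ?_ (hgint.const_mul _) ?_
    · -- the bound eventually holds
      have h1 : ∀ᶠ z in nhdsWithin z₀ {z : Fin n → ℂ | ∀ j, (z j).re ≤ 0}, ‖z‖ < ‖z₀‖ + 1 := by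
        refine Filter.Eventually.filter_mono nhdsWithin_le_nhds ?_
        refine Filter.eventually_of_mem (Metric.ball_mem_nhds z₀ one_pos) fun z hz => ?_
        rw [Metric.mem_ball, dist_eq_norm] at hz
        calc ‖z‖ = ‖z₀ + (z - z₀)‖ := by ring_nf
        _ ≤ ‖z₀‖ + ‖z - z₀‖ := norm_add_le _ _
        _ < ‖z₀‖ + 1 := by linarith
      have h2 : ∀ᶠ z in nhdsWithin z₀ {z : Fin n → ℂ | ∀ j, (z j).re ≤ 0},
          z ∈ {z : Fin n → ℂ | ∀ j, (z j).re ≤ 0} := self_mem_nhdsWithin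
      refine (h1.and h2).mono fun z hz => ?_
      refine hae.mono fun u hu => ?_
      have hs : (0:ℝ) ≤ min 1 (∑ j, u j) :=
        le_min one_pos.le (Finset.sum_nonneg fun j _ => hu j)
      calc ‖Complex.exp (∑ j, z j * (u j : ℂ)) - 1‖
          ≤ 2 * max 1 ‖z‖ * min 1 (∑ j, u j) := key_bound z u hz.2 hu
      _ ≤ 2 * max 1 (‖z₀‖ + 1) * min 1 (∑ j, u j) := by
          refine mul_le_mul_of_nonneg_right ?_ hs
          refine mul_le_mul_of_nonneg_left (max_le_max le_rfl hz.1.le) (by norm_num)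
    · -- a.e. continuity in z
      refine Filter.Eventually.of_forall fun u => ?_
      refine Continuous.continuousWithinAt ?_
      exact (Complex.continuous_exp.comp (continuous_finset_sum _ fun j _ =>
        (continuous_apply j).mul continuous_const)).sub continuous_const
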